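/- Let k ≥ 1, let h be a finite multiset of consumer types with flexibility levels in Fin k and real virtual valuations, and let y, z : Fin k → ℕ be supply profiles with ∑_{l ≤ j} y l ≥ ∑_{l ≤ j} z l for all j. Define the one-step value W(h, y) = max over feasible service vectors u (u j ≤ n j(h), ∑_{l ≤ j} u l ≤ ∑_{l ≤ j} y l for all j) of ∑_j (sum of the u j largest virtual valuations among level-j consumers in h). Then W(h, y) ≥ W(h, z). -/
import Mathlib


/-- Sum of the `m` largest elements of a finite multiset of reals, expressed as the
supremum of sums of sub-multisets of cardinality `m`. -/
noncomputable def topSum (s : Multiset ℝ) (m : ℕ) : ℝ :=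
  sSup {r : ℝ | ∃ t : Multiset ℝ, t ≤ s ∧ Multiset.card t = m ∧ r = t.sum}

/-- One-step (terminal-time) optimal virtual surplus: the supremum over feasible service
vectors `u` (with `u j` at most the number of level-`j` consumers in `h` and prefix-sum
supply constraints w.r.t. `y`) of the sum over levels `j` of the `u j` largest virtual
valuations among level-`j` consumers. -/
noncomputable def oneStepValue (k : ℕ) (h : Multiset (Fin k × ℝ)) (y : Fin k → ℕ) : ℝ :=
  sSup {r : ℝ | ∃ u : Fin k → ℕ,
    (∀ j : Fin k, u j ≤ Multiset.card (h.filter (fun c => c.1 = j))) ∧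
    (∀ j : Fin k, (∑ l ∈ Finset.Iic j, u l) ≤ (∑ l ∈ Finset.Iic j, y l)) ∧
    r = ∑ j : Fin k, topSum ((h.filter (fun c => c.1 = j)).map Prod.snd) (u j)}

lemma sum_le_sum_abs (t : Multiset ℝ) : t.sum ≤ (t.map (fun x => |x|)).sum := by
  induction t using Multiset.induction with
  | empty => simp
  | cons a t ih =>
      simp only [Multiset.map_cons, Multiset.sum_cons]
      exact add_le_add (le_abs_self a) ih

lemma topSum_le (s : Multiset ℝ) (m : ℕ) : topSum s m ≤ (s.map (fun x => |x|)).sum := by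
  apply Real.sSup_le
  · rintro r ⟨t, hts, hcard, rfl⟩
    refine (sum_le_sum_abs t).trans ?_
    obtain ⟨u, hu⟩ := Multiset.le_iff_exists_add.mp (Multiset.map_le_map hts)
    rw [hu, Multiset.sum_add]
    have : (0:ℝ) ≤ u.sum :=
      Multiset.sum_nonneg (fun x hx => by
        have : x ∈ s.map (fun x => |x|) := hu ▸ Multiset.mem_add.mpr (Or.inr hx)
        obtain ⟨a, _, rfl⟩ := Multiset.mem_map.mp this
        exact abs_nonneg a)
    linarith
  · exact Multiset.sum_nonneg (fun x hx => by
      obtain ⟨a, _, rfl⟩ := Multiset.mem_map.mp hx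
      exact abs_nonneg a)

/-- If the supply profile `y` dominates `z` in all prefix sums, then the
one-step optimal virtual surplus under `y` is at least that under `z`. -/
theorem stmt6 (k : ℕ) (hk : 1 ≤ k) (h : Multiset (Fin k × ℝ)) (y z : Fin k → ℕ)
    (hyz : ∀ j : Fin k, (∑ l ∈ Finset.Iic j, z l) ≤ (∑ l ∈ Finset.Iic j, y l)) :
    oneStepValue k h z ≤ oneStepValue k h y := by
  apply csSup_le_csSup
  · -- bounded above
    refine ⟨∑ j : Fin k, (((h.filter (fun c => c.1 = j)).map Prod.snd).map (fun x => |x|)).sum, ?_⟩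
    rintro r ⟨u, hu1, hu2, rfl⟩
    exact Finset.sum_le_sum (fun j _ => topSum_le _ _)
  · -- nonempty: u = 0 is feasible
    refine ⟨_, Set.mem_setOf.mpr ⟨fun _ => 0, fun j => Nat.zero_le _, fun j => ?_, rfl⟩⟩
    simp
  · -- subset
    rintro r ⟨u, hu1, hu2, rfl⟩
    exact ⟨u, hu1, fun j => (hu2 j).trans (hyz j), rfl⟩
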